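/- Suppose R is normalized (R 1 = 1). Let ν be a finite measure on X and let λ be the action of R on ν (∫ f dλ = ∫ R f dν for every bounded measurable f : X → ℝ). Then for all bounded measurable f₁, f₂ : X → ℝ one has ∫ ((R f₁) ∘ σ) · f₂ dλ = ∫ (R f₁) · (R f₂) dν, and consequently ∫ ((R f₁) ∘ σ) · f₂ dλ = ∫ f₁ · ((R f₂) ∘ σ) dλ; that is, the operator f ↦ (R f) ∘ σ is self-adjoint on L²(λ). -/
import Mathlib


open MeasureTheory

/-- If `R` is normalized and `λ = νR`, then
`∫ ((R f₁) ∘ σ) · f₂ dλ = ∫ (R f₁) · (R f₂) dν`, hence the operator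
`f ↦ (R f) ∘ σ` is self-adjoint on `L²(λ)`. -/
theorem stmt_12 {X : Type*} [MeasurableSpace X] (σ : X → X)
    (hσ : Measurable σ) (hσsurj : Function.Surjective σ)
    (R : (X → ℝ) → (X → ℝ))
    (hadd : ∀ f g : X → ℝ, R (f + g) = R f + R g)
    (hsmul : ∀ (c : ℝ) (f : X → ℝ), R (c • f) = c • R f)
    (hmeas : ∀ f : X → ℝ, Measurable f → Measurable (R f))
    (hpos : ∀ f : X → ℝ, 0 ≤ f → 0 ≤ R f)
    (hpull : ∀ f g : X → ℝ, Measurable f → Measurable g →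
      R ((f ∘ σ) * g) = f * R g)
    (hnorm : R 1 = 1)
    (ν : Measure X) [IsFiniteMeasure ν]
    (lam : Measure X) [IsFiniteMeasure lam]
    (hlam : ∀ f : X → ℝ, Measurable f → (∃ C : ℝ, ∀ x, |f x| ≤ C) →
      ∫ x, f x ∂lam = ∫ x, R f x ∂ν) :
    ∀ f₁ f₂ : X → ℝ, Measurable f₁ → Measurable f₂ →
      (∃ C : ℝ, ∀ x, |f₁ x| ≤ C) → (∃ C : ℝ, ∀ x, |f₂ x| ≤ C) →
      (∫ x, R f₁ (σ x) * f₂ x ∂lam = ∫ x, R f₁ x * R f₂ x ∂ν) ∧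
      (∫ x, R f₁ (σ x) * f₂ x ∂lam = ∫ x, f₁ x * R f₂ (σ x) ∂lam) := by
  -- R is monotone: f ≤ g → R f ≤ R g, via positivity and linearity
  have hsub : ∀ f g : X → ℝ, R (f - g) = R f - R g := by
    intro f g
    have : f - g = f + (-1 : ℝ) • g := by ext x; simp; ring
    rw [this, hadd, hsmul]; ext x; simp; ring
  have hbound : ∀ (f : X → ℝ) (C : ℝ), (∀ x, |f x| ≤ C) → ∀ x, |R f x| ≤ C := by
    intro f C hC x
    have h1 : (0 : X → ℝ) ≤ C • (1 : X → ℝ) - f := by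
      intro y; simp [Pi.smul_apply]
      exact (abs_le.1 (hC y)).2
    have h2 : (0 : X → ℝ) ≤ f + C • (1 : X → ℝ) := by
      intro y; simp [Pi.smul_apply]
      linarith [(abs_le.1 (hC y)).1]
    have p1 := hpos _ h1 x
    have p2 := hpos _ h2 x
    rw [hsub, hsmul, hnorm] at p1
    rw [hadd, hsmul, hnorm] at p2
    simp [Pi.smul_apply] at p1 p2
    rw [abs_le]; constructor <;> linarith
  -- the key identity
  have key : ∀ f₁ f₂ : X → ℝ, Measurable f₁ → Measurable f₂ →
      (∃ C : ℝ, ∀ x, |f₁ x| ≤ C) → (∃ C : ℝ, ∀ x, |f₂ x| ≤ C) →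
      ∫ x, R f₁ (σ x) * f₂ x ∂lam = ∫ x, R f₁ x * R f₂ x ∂ν := by
    intro f₁ f₂ hm₁ hm₂ ⟨C₁, hC₁⟩ ⟨C₂, hC₂⟩
    have hRm₁ := hmeas f₁ hm₁
    have hmg : Measurable (((R f₁) ∘ σ) * f₂) :=
      (hRm₁.comp hσ).mul hm₂
    have hbg : ∃ C : ℝ, ∀ x, |((R f₁ ∘ σ) * f₂) x| ≤ C := by
      refine ⟨C₁ * C₂, fun x => ?_⟩
      have h1 := hbound f₁ C₁ hC₁ (σ x)
      have h2 := hC₂ x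
      calc |((R f₁ ∘ σ) * f₂) x| = |R f₁ (σ x)| * |f₂ x| := by
            simp [abs_mul]
        _ ≤ C₁ * C₂ := by
            apply mul_le_mul h1 h2 (abs_nonneg _)
            exact le_trans (abs_nonneg _) h1
    have := hlam _ hmg hbg
    rw [hpull (R f₁) f₂ hRm₁ hm₂] at this
    simpa using this
  intro f₁ f₂ hm₁ hm₂ hb₁ hb₂
  have e1 := key f₁ f₂ hm₁ hm₂ hb₁ hb₂
  have e2 := key f₂ f₁ hm₂ hm₁ hb₂ hb₁
  refine ⟨e1, ?_⟩
  rw [e1]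
  have : ∫ x, f₁ x * R f₂ (σ x) ∂lam = ∫ x, R f₂ (σ x) * f₁ x ∂lam := by
    simp_rw [mul_comm]
  rw [this, e2]
  simp_rw [mul_comm]
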